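/- For every ε > 0, the number of triples (y1,y2,y3) of natural numbers with yi ≤ N, y1+y2+y3 = m1 and y1^2+y2^2+y3^2 = m2 is O_ε(N^ε), uniformly in m1, m2. -/

import Mathlib

open Finset Real

noncomputable def reps (M : ℕ) : Finset (ℤ × ℤ) :=
  ((Finset.Icc (-(M:ℤ)) M) ×ˢ (Finset.Icc (-(M:ℤ)) M)).filter fun p => p.1^2 + 3*p.2^2 = (M:ℤ)

lemma mem_reps {M : ℕ} {p : ℤ × ℤ} : p ∈ reps M ↔ p.1^2 + 3*p.2^2 = (M:ℤ) := by
  constructor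
  · intro h; exact (Finset.mem_filter.mp h).2
  · intro h
    refine Finset.mem_filter.mpr ⟨Finset.mem_product.mpr ⟨?_, ?_⟩, h⟩ <;>
      rw [Finset.mem_Icc] <;> constructor <;> nlinarith [sq_nonneg p.1, sq_nonneg p.2,
        sq_nonneg (p.1 - 1), sq_nonneg (p.1 + 1), sq_nonneg (p.2 - 1), sq_nonneg (p.2 + 1),
        Int.natCast_nonneg M]

noncomputable def primReps (M : ℕ) : Finset (ℤ × ℤ) := (reps M).filter fun p => Int.gcd p.1 p.2 = 1



-- divisibility fact for roots
lemma root_dvd {m : ℕ} [NeZero m] {s : ZMod m} (hs : s^2 = -3) :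
    (m:ℤ) ∣ ((s.val:ℤ)^2 + 3) := by
  rw [← ZMod.intCast_zmod_eq_zero_iff_dvd]
  push_cast
  rw [ZMod.natCast_val, ZMod.cast_id, hs]
  ring

lemma rootsCard (m : ℕ) [NeZero m] :
    (Finset.univ.filter fun s : ZMod m => s^2 = -3).card ≤ 2 * m.divisors.card := by
  classical
  set R := Finset.univ.filter fun s : ZMod m => s^2 = -3 with hR
  rcases R.eq_empty_or_nonempty with h | ⟨s0, hs0⟩
  · simp [h]
  have hm : m ≠ 0 := NeZero.ne m
  have hs0' : s0^2 = -3 := (Finset.mem_filter.mp hs0).2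
  set a0 : ℤ := (s0.val : ℤ) with ha0
  have h0 : (m:ℤ) ∣ a0^2 + 3 := root_dvd hs0'
  set f : ZMod m → ℕ := fun s => Int.gcd ((s.val:ℤ) - a0) m with hf
  have himg : R.image f ⊆ m.divisors := by
    intro d hd
    obtain ⟨s, -, rfl⟩ := Finset.mem_image.mp hd
    refine Nat.mem_divisors.mpr ⟨?_, hm⟩
    exact Int.natCast_dvd_natCast.mp (Int.gcd_dvd_right _ _)
  have hfib : ∀ d ∈ R.image f, (R.filter fun s => f s = d).card ≤ 2 := by
    intro d hd
    by_contra hcon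
    push_neg at hcon
    obtain ⟨s1, h1, s2, h2, s3, h3, h12, h13, h23⟩ := Finset.two_lt_card.mp hcon
    -- facts for an element of the fiber
    have key : ∀ s ∈ R.filter fun s => f s = d,
        (d:ℤ) ∣ ((s.val:ℤ) - a0) ∧ ((m/d : ℕ):ℤ) ∣ ((s.val:ℤ) + a0) := by
      intro s hs
      obtain ⟨hsR, hsd⟩ := Finset.mem_filter.mp hs
      set a : ℤ := (s.val : ℤ)
      have hsd' : Int.gcd (a - a0) (m:ℤ) = d := hsd
      have hroot : (m:ℤ) ∣ a^2 + 3 := root_dvd (Finset.mem_filter.mp hsR).2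
      have hgl : (d:ℤ) ∣ (a - a0) := hsd' ▸ Int.gcd_dvd_left _ _
      refine ⟨hgl, ?_⟩
      have hdm : d ∣ m := by
        have := Int.gcd_dvd_right (a := a - a0) (b := (m:ℤ))
        rw [hsd'] at this
        exact Int.natCast_dvd_natCast.mp this
      have hd0 : d ≠ 0 := by
        rintro rfl
        have h2 := Int.gcd_eq_zero_iff.mp hsd'
        exact hm (by exact_mod_cast h2.2)
      have hmm : (m:ℤ) ∣ (a - a0) * (a + a0) := by
        have : (a - a0) * (a + a0) = (a^2 + 3) - (a0^2 + 3) := by ring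
        rw [this]; exact dvd_sub hroot h0
      set e : ℕ := m / d with he
      have hde' : d * e = m := Nat.mul_div_cancel' hdm
      have hde : (d:ℤ) * (e:ℤ) = (m:ℤ) := by exact_mod_cast congrArg (Nat.cast : ℕ → ℤ) hde'
      set x : ℤ := (a - a0) / d with hx
      have hxe : a - a0 = (d:ℤ) * x := (Int.mul_ediv_cancel' hgl).symm
      have hcop : Int.gcd x (e:ℤ) = 1 := by
        have hgcd : (0:ℕ) < Int.gcd (a - a0) (m:ℤ) := by
          rw [hsd']; omega
        have h5 := Int.gcd_div_gcd_div_gcd hgcd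
        rw [hsd'] at h5
        rw [hx, he, Int.natCast_ediv]
        exact h5
      have hediv : (e:ℤ) ∣ x * (a + a0) := by
        have : (d:ℤ) * (e:ℤ) ∣ (d:ℤ) * (x * (a + a0)) := by
          rw [hde, ← mul_assoc, ← hxe]; exact hmm
        exact (mul_dvd_mul_iff_left (by exact_mod_cast hd0 : (d:ℤ) ≠ 0)).mp this
      have : IsCoprime (e:ℤ) x := by
        rw [Int.isCoprime_iff_gcd_eq_one, Int.gcd_comm]; exact hcop
      exact this.dvd_of_dvd_mul_left hediv
    obtain ⟨hdm, -⟩ := Nat.mem_divisors.mp (himg hd)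
    have hd0 : d ≠ 0 := by rintro rfl; exact hm (Nat.eq_zero_of_zero_dvd hdm)
    set e : ℕ := m / d with he
    have hde : d * e = m := Nat.mul_div_cancel' hdm
    have he0 : e ≠ 0 := by intro h; rw [h] at hde; omega
    set g : ℕ := Nat.gcd d e with hg
    set L : ℕ := Nat.lcm d e with hL
    have hLg : L * g = m := by
      rw [hL, hg, Nat.mul_comm]
      have := Nat.gcd_mul_lcm d e
      omega
    have hL0 : L ≠ 0 := Nat.lcm_ne_zero hd0 he0
    obtain ⟨k1d, k1e⟩ := key s1 h1
    obtain ⟨k2d, k2e⟩ := key s2 h2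
    obtain ⟨k3d, k3e⟩ := key s3 h3
    -- g ≤ 2
    have hg2 : g ≤ 2 := by
      have hgd : (g:ℤ) ∣ d := Int.natCast_dvd_natCast.mpr (Nat.gcd_dvd_left d e)
      have hge : (g:ℤ) ∣ e := Int.natCast_dvd_natCast.mpr (Nat.gcd_dvd_right d e)
      have h2a0 : (g:ℤ) ∣ 2 * a0 := by
        have hA : (g:ℤ) ∣ ((s1.val:ℤ) - a0) := hgd.trans k1d
        have hB : (g:ℤ) ∣ ((s1.val:ℤ) + a0) := hge.trans k1e
        have : (g:ℤ) ∣ (((s1.val:ℤ) + a0) - ((s1.val:ℤ) - a0)) := dvd_sub hB hA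
        simpa [two_mul] using (by convert this using 1; ring : (g:ℤ) ∣ (2 * a0))
      have hgg : ((g:ℤ) * g) ∣ (m:ℤ) := by
        rw [show (m:ℤ) = (d:ℤ) * e by exact_mod_cast hde.symm]
        exact mul_dvd_mul hgd hge
      have h12 : ((g:ℤ) * g) ∣ 12 := by
        have t1 : ((g:ℤ) * g) ∣ 4 * (a0^2 + 3) := hgg.trans (Dvd.dvd.mul_left h0 4)
        have t2 : ((g:ℤ) * g) ∣ (2 * a0) * (2 * a0) := mul_dvd_mul h2a0 h2a0
        have : ((g:ℤ) * g) ∣ (4 * (a0^2 + 3) - (2 * a0) * (2 * a0)) := dvd_sub t1 t2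
        convert this using 1; ring
      have h12' : g * g ∣ 12 := by exact_mod_cast h12
      have hle := Nat.le_of_dvd (by norm_num) h12'
      by_contra hcc
      push_neg at hcc
      have hg3 : g ≤ 3 := by nlinarith
      interval_cases g
      norm_num at h12'
    have hm2L : m ≤ 2 * L := by
      have : L * g ≤ L * 2 := Nat.mul_le_mul_left L hg2
      omega
    -- pairwise differences
    have hval : ∀ s ∈ R.filter fun s => f s = d, 0 ≤ (s.val:ℤ) ∧ (s.val:ℤ) < m :=
      fun s _ => ⟨Int.natCast_nonneg _, by exact_mod_cast ZMod.val_lt s⟩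
    have pair : ∀ s t : ZMod m, s ∈ R.filter (fun s => f s = d) →
        t ∈ R.filter (fun s => f s = d) →
        (s.val:ℤ) - t.val = 0 ∨ (s.val:ℤ) - t.val = L ∨ (s.val:ℤ) - t.val = -(L:ℤ) := by
      intro s t hsf htf
      obtain ⟨ksd, kse⟩ := key s hsf
      obtain ⟨ktd, kte⟩ := key t htf
      have hdd : (d:ℤ) ∣ ((s.val:ℤ) - t.val) := by
        have := dvd_sub ksd ktd; rwa [sub_sub_sub_cancel_right] at this
      have hee : (e:ℤ) ∣ ((s.val:ℤ) - t.val) := by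
        have := dvd_sub kse kte; rwa [add_sub_add_right_eq_sub] at this
      have hlcm : (L:ℤ) ∣ ((s.val:ℤ) - t.val) := by
        have := Int.coe_lcm_dvd hdd hee
        rwa [show Int.lcm (d:ℤ) (e:ℤ) = L from rfl] at this
      obtain ⟨t', ht'⟩ := hlcm
      obtain ⟨hs0', hs1'⟩ := hval s hsf
      obtain ⟨ht0', ht1'⟩ := hval t htf
      have hLpos : (0:ℤ) < L := by exact_mod_cast Nat.pos_of_ne_zero hL0
      have hmL : (m:ℤ) ≤ 2 * L := by exact_mod_cast hm2L
      have htb : -2 < t' ∧ t' < 2 := by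
        constructor <;> nlinarith
      obtain ⟨hta, htbb⟩ := htb
      interval_cases t' <;> omega
    have d12 := pair s1 s2 h1 h2
    have d13 := pair s1 s3 h1 h3
    have d23 := pair s2 s3 h2 h3
    have n12 : (s1.val:ℤ) ≠ s2.val := by
      intro hh; exact h12 (ZMod.val_injective m (by exact_mod_cast hh))
    have n13 : (s1.val:ℤ) ≠ s3.val := by
      intro hh; exact h13 (ZMod.val_injective m (by exact_mod_cast hh))
    have n23 : (s2.val:ℤ) ≠ s3.val := by
      intro hh; exact h23 (ZMod.val_injective m (by exact_mod_cast hh))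
    have hLpos : (0:ℤ) < L := by exact_mod_cast Nat.pos_of_ne_zero hL0
    omega
  calc R.card ≤ 2 * (R.image f).card := Finset.card_le_mul_card_image (f := f) R 2 hfib
    _ ≤ 2 * m.divisors.card := by
      have := Finset.card_le_card himg; omega





lemma primReps_zero : primReps 0 = ∅ := by
  ext p
  simp only [primReps, Finset.mem_filter, Finset.notMem_empty, iff_false, not_and]
  intro hp
  have h0 : p.1^2 + 3*p.2^2 = 0 := by exact_mod_cast mem_reps.mp hp
  have e1 : p.1^2 = 0 := by nlinarith [sq_nonneg p.1, sq_nonneg p.2]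
  have e2 : p.2^2 = 0 := by nlinarith [sq_nonneg p.1, sq_nonneg p.2]
  have h1 : p.1 = 0 := by exact pow_eq_zero_iff (by norm_num) |>.mp e1
  have h2 : p.2 = 0 := by exact pow_eq_zero_iff (by norm_num) |>.mp e2
  simp [h1, h2]

lemma primRepsCard (m : ℕ) (hm : m ≠ 0) : (primReps m).card ≤ 4 * m.divisors.card := by
  classical
  haveI : NeZero m := ⟨hm⟩
  set φ : ℤ × ℤ → ZMod m := fun p => (p.1 : ZMod m) * (p.2 : ZMod m)⁻¹ with hφ
  have hmem : ∀ p ∈ primReps m, p.1^2 + 3*p.2^2 = (m:ℤ) ∧ Int.gcd p.1 p.2 = 1 := by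
    intro p hp
    obtain ⟨h1, h2⟩ := Finset.mem_filter.mp hp
    exact ⟨mem_reps.mp h1, h2⟩
  have hunit : ∀ p ∈ primReps m, IsUnit ((p.2 : ℤ) : ZMod m) := by
    intro p hp
    obtain ⟨heq, hgcd⟩ := hmem p hp
    have hgv : Int.gcd p.2 (m:ℤ) = 1 := by
      have hc : Int.gcd (p.1^2) p.2 = 1 :=
        Int.isCoprime_iff_gcd_eq_one.mp
          ((Int.isCoprime_iff_gcd_eq_one.mpr hgcd).pow_left)
      have h2 : ((Int.gcd p.2 (m:ℤ) : ℤ)) ∣ p.2 := Int.gcd_dvd_left _ _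
      have hd1 : ((Int.gcd p.2 (m:ℤ) : ℤ)) ∣ p.1^2 := by
        have h1 : ((Int.gcd p.2 (m:ℤ) : ℤ)) ∣ (m:ℤ) := Int.gcd_dvd_right _ _
        have h3 : ((Int.gcd p.2 (m:ℤ) : ℤ)) ∣ 3 * p.2^2 :=
          Dvd.dvd.mul_left (dvd_pow h2 (by norm_num)) 3
        have h4 : p.1^2 = (m:ℤ) - 3*p.2^2 := by linarith
        rw [h4]; exact dvd_sub h1 h3
      have h5 : ((Int.gcd p.2 (m:ℤ) : ℤ)) ∣ (1:ℤ) := by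
        have := Int.dvd_coe_gcd hd1 h2
        rwa [hc] at this
      exact_mod_cast Int.eq_one_of_dvd_one (by positivity) h5
    have hco : p.2.natAbs.Coprime m := by
      simpa [Int.gcd, Int.natAbs_natCast] using hgv
    have hu : IsUnit ((p.2.natAbs : ℕ) : ZMod m) := (ZMod.isUnit_iff_coprime _ m).mpr hco
    rcases Int.natAbs_eq p.2 with h | h
    · rw [h, Int.cast_natCast]; exact hu
    · rw [h, Int.cast_neg, Int.cast_natCast]; exact hu.neg
  have hroot : ∀ p ∈ primReps m, (φ p)^2 = -3 := by
    intro p hp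
    obtain ⟨heq, -⟩ := hmem p hp
    have hv := ZMod.mul_inv_of_unit _ (hunit p hp)
    have hc : ((p.1 : ℤ) : ZMod m)^2 + 3 * ((p.2 : ℤ) : ZMod m)^2 = 0 := by
      have : (((p.1^2 + 3*p.2^2 : ℤ)) : ZMod m) = (((m:ℤ)) : ZMod m) :=
        congrArg (fun z : ℤ => (z : ZMod m)) heq
      push_cast at this
      rw [ZMod.natCast_self] at this
      push_cast
      linear_combination this
    have expand : (φ p)^2 = ((p.1 : ℤ) : ZMod m)^2 * (((p.2 : ℤ) : ZMod m)⁻¹)^2 := by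
      rw [hφ]; ring
    rw [expand]
    have h1 : ((p.1 : ℤ) : ZMod m)^2 = -3 * ((p.2 : ℤ) : ZMod m)^2 := by
      linear_combination hc
    rw [h1]
    calc -3 * ((p.2 : ℤ) : ZMod m)^2 * (((p.2 : ℤ) : ZMod m)⁻¹)^2
        = -3 * (((p.2 : ℤ) : ZMod m) * ((p.2 : ℤ) : ZMod m)⁻¹)^2 := by ring
      _ = -3 := by rw [hv]; ring
  have himg : (primReps m).image φ ⊆ Finset.univ.filter fun s : ZMod m => s^2 = -3 := by
    intro c hc
    obtain ⟨p, hp, rfl⟩ := Finset.mem_image.mp hc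
    exact Finset.mem_filter.mpr ⟨Finset.mem_univ _, hroot p hp⟩
  have hfib : ∀ c ∈ (primReps m).image φ, ((primReps m).filter fun p => φ p = c).card ≤ 2 := by
    intro c hc
    obtain ⟨p0, hp0, hc0⟩ := Finset.mem_image.mp hc
    have hsub : ((primReps m).filter fun p => φ p = c) ⊆ insert p0 {(-p0.1, -p0.2)} := by
      intro p hp
      obtain ⟨hpm, hpc⟩ := Finset.mem_filter.mp hp
      obtain ⟨heq, hgcd⟩ := hmem p hpm
      obtain ⟨heq0, hgcd0⟩ := hmem p0 hp0
      have hv := ZMod.mul_inv_of_unit _ (hunit p hpm)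
      have hv0 := ZMod.mul_inv_of_unit _ (hunit p0 hp0)
      -- cross relation in ZMod m
      have hcross : ((p.1 : ℤ) : ZMod m) * ((p0.2 : ℤ) : ZMod m)
          = ((p0.1 : ℤ) : ZMod m) * ((p.2 : ℤ) : ZMod m) := by
        have hpp : φ p = φ p0 := by rw [hpc, hc0]
        have hpp' : ((p.1:ℤ) : ZMod m) * ((p.2:ℤ) : ZMod m)⁻¹
            = ((p0.1:ℤ):ZMod m) * ((p0.2:ℤ):ZMod m)⁻¹ := hpp
        linear_combination (((p.2:ℤ) : ZMod m) * ((p0.2:ℤ) : ZMod m)) * hpp'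
          - (((p.1:ℤ) : ZMod m) * ((p0.2:ℤ):ZMod m)) * hv
          + (((p0.1:ℤ):ZMod m) * ((p.2:ℤ):ZMod m)) * hv0
      have hdvd : (m:ℤ) ∣ (p.1 * p0.2 - p0.1 * p.2) := by
        rw [← ZMod.intCast_zmod_eq_zero_iff_dvd]
        push_cast
        rw [hcross]; ring
      have hD : p.1 * p0.2 - p0.1 * p.2 = 0 := by
        apply Int.eq_zero_of_abs_lt_dvd hdvd
        have hid : (p.1*p0.1 + 3*p.2*p0.2)^2 + 3*(p.1 * p0.2 - p0.1 * p.2)^2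
            = (m:ℤ)^2 := by
          have : (p.1^2 + 3*p.2^2) * (p0.1^2 + 3*p0.2^2) = (m:ℤ) * (m:ℤ) := by
            rw [heq, heq0]
          nlinarith [this]
        have hm1 : (1:ℤ) ≤ (m:ℤ) := by exact_mod_cast Nat.one_le_iff_ne_zero.mpr hm
        rw [abs_lt]
        constructor <;> nlinarith [sq_nonneg (p.1*p0.1 + 3*p.2*p0.2)]
      have hC : p.1 * p0.2 = p0.1 * p.2 := by linarith
      -- |p.2| = |p0.2|
      have hcp : IsCoprime p.1 p.2 := Int.isCoprime_iff_gcd_eq_one.mpr hgcd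
      have hcp0 : IsCoprime p0.1 p0.2 := Int.isCoprime_iff_gcd_eq_one.mpr hgcd0
      have hd1 : p.2 ∣ p0.2 := by
        have h1 : p.2 ∣ p.1 * p0.2 := hC ▸ Dvd.intro_left p0.1 rfl
        exact (hcp.symm).dvd_of_dvd_mul_left h1
      have hd2 : p0.2 ∣ p.2 := by
        have h1 : p0.2 ∣ p0.1 * p.2 := hC ▸ Dvd.intro_left p.1 rfl
        exact (hcp0.symm).dvd_of_dvd_mul_left (hC ▸ h1)
      have hB : p.2 = p0.2 ∨ p.2 = -p0.2 := by
        have := Nat.dvd_antisymm (Int.natAbs_dvd_natAbs.mpr hd1) (Int.natAbs_dvd_natAbs.mpr hd2)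
        exact Int.natAbs_eq_natAbs_iff.mp this
      have hA : p.1 = p0.1 ∨ p.1 = -p0.1 := by
        have h22 : p.2^2 = p0.2^2 := by rcases hB with h | h <;> rw [h] <;> ring
        have : (p.1 - p0.1) * (p.1 + p0.1) = 0 := by nlinarith [heq, heq0, h22]
        rcases mul_eq_zero.mp this with h | h
        · left; linarith
        · right; linarith
      have hgoal : p = p0 ∨ p = (-p0.1, -p0.2) := by
        rcases hA with hA | hA <;> rcases hB with hB | hB
        · left; exact Prod.ext hA hB
        · -- p.1 = p0.1, p.2 = -p0.2 : then p0.1*p0.2 = 0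
          have hz : p0.1 * p0.2 = 0 := by
            have := hC; rw [hA, hB] at this; linarith
          rcases mul_eq_zero.mp hz with h | h
          · right; refine Prod.ext ?_ hB; simp [hA, h]
          · left; refine Prod.ext hA ?_; simp [hB, h]
        · have hz : p0.1 * p0.2 = 0 := by
            have := hC; rw [hA, hB] at this; linarith
          rcases mul_eq_zero.mp hz with h | h
          · left; refine Prod.ext ?_ hB; simp [hA, h]
          · right; refine Prod.ext hA ?_; simp [hB, h]
        · right; exact Prod.ext hA hB
      rcases hgoal with h | h
      · exact Finset.mem_insert.mpr (Or.inl h)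
      · exact Finset.mem_insert.mpr (Or.inr (by simp [h]))
    calc ((primReps m).filter fun p => φ p = c).card
        ≤ (insert p0 ({(-p0.1, -p0.2)} : Finset (ℤ × ℤ))).card := Finset.card_le_card hsub
      _ ≤ 2 := by
        apply le_trans (Finset.card_insert_le _ _)
        simp
  calc (primReps m).card ≤ 2 * ((primReps m).image φ).card :=
        Finset.card_le_mul_card_image (f := φ) _ 2 hfib
    _ ≤ 2 * (Finset.univ.filter fun s : ZMod m => s^2 = -3).card := by
        have := Finset.card_le_card himg; omega
    _ ≤ 2 * (2 * m.divisors.card) := by have := rootsCard m; omega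
    _ = 4 * m.divisors.card := by ring




lemma repsCard_le (M : ℕ) (hM : M ≠ 0) :
    (reps M).card ≤ ∑ g ∈ M.divisors, (primReps (M / (g*g))).card := by
  classical
  rw [← Finset.card_sigma]
  apply Finset.card_le_card_of_injOn
    (f := fun p => ⟨Int.gcd p.1 p.2, (p.1 / Int.gcd p.1 p.2, p.2 / Int.gcd p.1 p.2)⟩)
  · intro p hp
    have heq : p.1^2 + 3*p.2^2 = (M:ℤ) := mem_reps.mp hp
    set g : ℕ := Int.gcd p.1 p.2 with hg
    have hg0 : g ≠ 0 := by
      intro h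
      obtain ⟨h1, h2⟩ := Int.gcd_eq_zero_iff.mp (hg ▸ h)
      rw [h1, h2] at heq
      simp at heq
      exact hM (by exact_mod_cast heq.symm)
    have hgp1 : (g:ℤ) ∣ p.1 := Int.gcd_dvd_left _ _
    have hgp2 : (g:ℤ) ∣ p.2 := Int.gcd_dvd_right _ _
    have hggM : (g*g : ℕ) ∣ M := by
      have : ((g*g : ℕ) : ℤ) ∣ (M:ℤ) := by
        push_cast
        rw [← heq]
        have d1 : (g:ℤ)*(g:ℤ) ∣ p.1^2 := by
          rw [sq]; exact mul_dvd_mul hgp1 hgp1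
        have d2 : (g:ℤ)*(g:ℤ) ∣ 3*p.2^2 := by
          rw [sq]; exact (mul_dvd_mul hgp2 hgp2).mul_left 3
        exact dvd_add d1 d2
      exact_mod_cast this
    have hgM : g ∈ M.divisors := Nat.mem_divisors.mpr ⟨dvd_trans (Dvd.intro g rfl) hggM, hM⟩
    refine Finset.mem_sigma.mpr ⟨hgM, ?_⟩
    refine Finset.mem_filter.mpr ⟨mem_reps.mpr ?_, ?_⟩
    · obtain ⟨k, hk⟩ := hggM
      have hMdiv : M / (g*g) = k := by
        rw [hk]; exact Nat.mul_div_cancel_left k (Nat.pos_of_ne_zero (by simpa using hg0))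
      rw [hMdiv]
      obtain ⟨x, hx⟩ := hgp1
      obtain ⟨y, hy⟩ := hgp2
      dsimp only
      rw [← hg]
      rw [hx, hy,
        Int.mul_ediv_cancel_left _ (by exact_mod_cast hg0 : (g:ℤ) ≠ 0),
        Int.mul_ediv_cancel_left _ (by exact_mod_cast hg0 : (g:ℤ) ≠ 0)]
      have hk' : (M:ℤ) = (g:ℤ)*g*k := by exact_mod_cast hk
      have hmain : ((g:ℤ)*g) * (x^2 + 3*y^2) = ((g:ℤ)*g) * k := by
        rw [hx, hy] at heq
        linear_combination heq + hk'
      exact mul_left_cancel₀ (by positivity : ((g:ℤ)*g) ≠ 0) hmain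
    · exact Int.gcd_div_gcd_div_gcd (Nat.pos_of_ne_zero hg0)
  · intro p hp q hq hpq
    have heqp : p.1^2 + 3*p.2^2 = (M:ℤ) := mem_reps.mp hp
    have heqq : q.1^2 + 3*q.2^2 = (M:ℤ) := mem_reps.mp hq
    simp only [Sigma.mk.inj_iff] at hpq
    obtain ⟨h1, h2⟩ := hpq
    have h2' := eq_of_heq h2
    have h21 := congrArg Prod.fst h2'
    have h22 := congrArg Prod.snd h2'
    simp only [] at h21 h22
    have hgne : (Int.gcd p.1 p.2 : ℤ) ≠ 0 ∧ (Int.gcd q.1 q.2 : ℤ) ≠ 0 := by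
      constructor <;>
      · intro h
        have h0 : Int.gcd p.1 p.2 = 0 ∨ Int.gcd q.1 q.2 = 0 := by
          first
          | exact Or.inl (by exact_mod_cast h)
          | exact Or.inr (by exact_mod_cast h)
        rcases h0 with h0 | h0
        · obtain ⟨e1, e2⟩ := Int.gcd_eq_zero_iff.mp h0
          rw [e1, e2] at heqp; simp at heqp; exact hM (by exact_mod_cast heqp.symm)
        · obtain ⟨e1, e2⟩ := Int.gcd_eq_zero_iff.mp h0
          rw [e1, e2] at heqq; simp at heqq; exact hM (by exact_mod_cast heqq.symm)
    have hp1 : p.1 = (Int.gcd p.1 p.2 : ℤ) * (p.1 / Int.gcd p.1 p.2) :=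
      (Int.mul_ediv_cancel' (Int.gcd_dvd_left _ _)).symm
    have hp2 : p.2 = (Int.gcd p.1 p.2 : ℤ) * (p.2 / Int.gcd p.1 p.2) :=
      (Int.mul_ediv_cancel' (Int.gcd_dvd_right _ _)).symm
    have hq1 : q.1 = (Int.gcd q.1 q.2 : ℤ) * (q.1 / Int.gcd q.1 q.2) :=
      (Int.mul_ediv_cancel' (Int.gcd_dvd_left _ _)).symm
    have hq2 : q.2 = (Int.gcd q.1 q.2 : ℤ) * (q.2 / Int.gcd q.1 q.2) :=
      (Int.mul_ediv_cancel' (Int.gcd_dvd_right _ _)).symm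
    have : p.1 = q.1 := by rw [hp1, hq1, h21, h1]
    have h2eq : p.2 = q.2 := by rw [hp2, hq2, h22, h1]
    exact Prod.ext this h2eq

lemma tau_le (δ : ℝ) (hδ0 : 0 < δ) (hδ1 : δ ≤ 1) :
    ∃ C : ℝ, 1 ≤ C ∧ ∀ M : ℕ, M ≠ 0 → (M.divisors.card : ℝ) ≤ C * (M:ℝ) ^ δ := by
  set K : ℕ := ⌈(2:ℝ) ^ (1/δ)⌉₊ with hK
  set B : ℝ := 2/δ with hB
  have hB1 : 1 ≤ B := by
    rw [hB]; rw [le_div_iff₀ hδ0]; linarith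
  refine ⟨B ^ K, one_le_pow₀ hB1, ?_⟩
  intro M hM
  -- τ(M) = ∏ (k_p + 1)
  have htau : (M.divisors.card : ℝ) = ∏ p ∈ M.primeFactors, ((M.factorization p : ℝ) + 1) := by
    rw [Nat.card_divisors hM]
    push_cast
    rfl
  -- M^δ = ∏ p^(k_p δ)
  have hMeq : (M:ℝ) = ∏ p ∈ M.primeFactors, ((p:ℝ) ^ (M.factorization p : ℕ)) := by
    conv_lhs => rw [← Nat.factorization_prod_pow_eq_self hM]
    rw [Nat.prod_factorization_eq_prod_primeFactors]
    push_cast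
    rfl
  have hMrpow : (M:ℝ) ^ δ = ∏ p ∈ M.primeFactors, ((p:ℝ) ^ ((M.factorization p : ℝ) * δ)) := by
    rw [hMeq, ← Real.finset_prod_rpow _ _ (fun i _ => by positivity) δ]
    apply Finset.prod_congr rfl
    intro p hp
    rw [← Real.rpow_natCast (p:ℝ) (M.factorization p), ← Real.rpow_mul (by positivity)]
  -- per-prime bound
  have hterm : ∀ p ∈ M.primeFactors,
      ((M.factorization p : ℝ) + 1) ≤
        (if p < K then B else 1) * ((p:ℝ) ^ ((M.factorization p : ℝ) * δ)) := by
    intro p hp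
    have hprime : p.Prime := Nat.prime_of_mem_primeFactors hp
    have hp2 : (2:ℝ) ≤ (p:ℝ) := by exact_mod_cast hprime.two_le
    set k : ℕ := M.factorization p with hk
    have hkδ : 0 ≤ (k:ℝ) * δ := by positivity
    by_cases hpK : p < K
    · simp only [hpK, if_true]
      have h2 : (2:ℝ) ^ ((k:ℝ) * δ) ≤ (p:ℝ) ^ ((k:ℝ) * δ) :=
        Real.rpow_le_rpow (by norm_num) hp2 hkδ
      have h3 : 1 + (k:ℝ) * δ * Real.log 2 ≤ (2:ℝ) ^ ((k:ℝ) * δ) := by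
        rw [Real.rpow_def_of_pos (by norm_num)]
        have h := Real.add_one_le_exp (Real.log 2 * ((k:ℝ) * δ))
        calc 1 + (k:ℝ) * δ * Real.log 2 = Real.log 2 * ((k:ℝ) * δ) + 1 := by ring
          _ ≤ Real.exp (Real.log 2 * ((k:ℝ) * δ)) := h
      have hlog : (1:ℝ)/2 ≤ Real.log 2 := by
        have := Real.log_two_gt_d9
        linarith
      have h4 : 1 + (k:ℝ) * δ * (1/2) ≤ 1 + (k:ℝ) * δ * Real.log 2 := by
        have : 0 ≤ (k:ℝ) * δ := hkδ
        nlinarith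
      have h5 : B * (1 + (k:ℝ) * δ * (1/2)) = B + (k:ℝ) := by
        rw [hB]; field_simp
      calc ((k:ℝ) + 1) ≤ B + (k:ℝ) := by linarith
        _ = B * (1 + (k:ℝ) * δ * (1/2)) := h5.symm
        _ ≤ B * ((p:ℝ) ^ ((k:ℝ) * δ)) := by
            apply mul_le_mul_of_nonneg_left _ (by linarith)
            linarith
    · simp only [hpK, if_false, one_mul]
      push_neg at hpK
      have hKp : (2:ℝ) ^ (1/δ) ≤ (p:ℝ) := by
        calc (2:ℝ) ^ (1/δ) ≤ (K:ℝ) := Nat.le_ceil _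
          _ ≤ (p:ℝ) := by exact_mod_cast hpK
      have h1 : ((2:ℝ) ^ (1/δ)) ^ ((k:ℝ) * δ) ≤ (p:ℝ) ^ ((k:ℝ) * δ) :=
        Real.rpow_le_rpow (by positivity) hKp hkδ
      have h2 : ((2:ℝ) ^ (1/δ)) ^ ((k:ℝ) * δ) = (2:ℝ) ^ (k:ℝ) := by
        rw [← Real.rpow_mul (by norm_num)]
        congr 1
        field_simp
      have h3 : (k:ℝ) + 1 ≤ (2:ℝ) ^ (k:ℝ) := by
        rw [Real.rpow_natCast]
        have := Nat.lt_two_pow_self (n := k)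
        have h4 : (k:ℝ) + 1 ≤ ((2^k : ℕ) : ℝ) := by exact_mod_cast this
        calc (k:ℝ) + 1 ≤ ((2^k : ℕ) : ℝ) := h4
          _ = (2:ℝ)^k := by push_cast; ring
      linarith
  -- combine
  calc (M.divisors.card : ℝ)
      = ∏ p ∈ M.primeFactors, ((M.factorization p : ℝ) + 1) := htau
    _ ≤ ∏ p ∈ M.primeFactors,
        ((if p < K then B else 1) * ((p:ℝ) ^ ((M.factorization p : ℝ) * δ))) := by
        apply Finset.prod_le_prod
        · intro p hp; positivity
        · exact hterm
    _ = (∏ p ∈ M.primeFactors, (if p < K then B else 1)) *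
        (∏ p ∈ M.primeFactors, ((p:ℝ) ^ ((M.factorization p : ℝ) * δ))) :=
        Finset.prod_mul_distrib
    _ ≤ B ^ K * (M:ℝ) ^ δ := by
        rw [← hMrpow]
        apply mul_le_mul_of_nonneg_right _ (by positivity)
        calc (∏ p ∈ M.primeFactors, (if p < K then B else 1))
            = ∏ p ∈ M.primeFactors.filter (· < K), B := by
              rw [Finset.prod_ite]
              simp
          _ = B ^ (M.primeFactors.filter (· < K)).card := by
              rw [Finset.prod_const]
          _ ≤ B ^ K := by
              apply pow_le_pow_right₀ hB1
              calc (M.primeFactors.filter (· < K)).card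
                  ≤ (Finset.range K).card := by
                    apply Finset.card_le_card
                    intro x hx
                    rw [Finset.mem_range]
                    exact (Finset.mem_filter.mp hx).2
                _ = K := Finset.card_range K

set_option maxHeartbeats 2000000 in
theorem stmt_1 (ε : ℝ) (hε : 0 < ε) :
    ∃ C : ℝ, 0 < C ∧ ∀ N m1 m2 : ℕ,
      (((Finset.Icc 1 N ×ˢ Finset.Icc 1 N ×ˢ Finset.Icc 1 N).filter
        (fun y => y.1 + y.2.1 + y.2.2 = m1 ∧
          y.1 ^ 2 + y.2.1 ^ 2 + y.2.2 ^ 2 = m2)).card : ℝ) ≤ C * (N : ℝ) ^ ε := by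
  classical
  set δ : ℝ := (min ε 1) / 5 with hδ
  have hε1 : 0 < min ε 1 := lt_min hε one_pos
  have hδ0 : 0 < δ := by positivity
  have hδ1 : δ ≤ 1 := by
    rw [hδ]
    have : min ε 1 ≤ 1 := min_le_right _ _
    linarith
  obtain ⟨C₀, hC₀1, hC₀⟩ := tau_le δ hδ0 hδ1
  refine ⟨72 * C₀^2 + 1, by positivity, ?_⟩
  intro N m1 m2
  set S := (Finset.Icc 1 N ×ˢ Finset.Icc 1 N ×ˢ Finset.Icc 1 N).filter
      (fun y => y.1 + y.2.1 + y.2.2 = m1 ∧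
        y.1 ^ 2 + y.2.1 ^ 2 + y.2.2 ^ 2 = m2) with hS
  rcases S.eq_empty_or_nonempty with hSe | ⟨y, hy⟩
  · rw [hSe]
    simp only [Finset.card_empty, Nat.cast_zero]
    positivity
  -- basic facts from the witness
  obtain ⟨hymem, hysum, hysq⟩ := Finset.mem_filter.mp hy
  obtain ⟨hy1, hy23⟩ := Finset.mem_product.mp hymem
  obtain ⟨hy2, hy3⟩ := Finset.mem_product.mp hy23
  rw [Finset.mem_Icc] at hy1 hy2 hy3
  have hN1 : 1 ≤ N := le_trans hy1.1 hy1.2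
  have hNR : (1:ℝ) ≤ (N:ℝ) := by exact_mod_cast hN1
  have hNeps : (1:ℝ) ≤ (N:ℝ) ^ ε := by
    have := Real.rpow_le_rpow_of_exponent_le hNR (le_of_lt hε : (0:ℝ) ≤ ε)
    rwa [Real.rpow_zero] at this
  have hm2N : m2 ≤ 3 * N^2 := by
    rw [← hysq]
    have e1 : y.1 ≤ N := hy1.2
    have e2 : y.2.1 ≤ N := hy2.2
    have e3 : y.2.2 ≤ N := hy3.2
    nlinarith
  have hCS : m1^2 ≤ 3 * m2 := by
    rw [← hysum, ← hysq]
    nlinarith [sq_nonneg (y.1 - y.2.1 : ℤ), sq_nonneg (y.2.1 - y.2.2 : ℤ),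
      sq_nonneg ((y.1 : ℤ) - y.2.2),
      (by push_cast; ring : ((y.1 + y.2.1 + y.2.2)^2 : ℤ) = ((y.1:ℤ) + y.2.1 + y.2.2)^2)]
  set Mn : ℕ := 6 * m2 - 2 * m1^2 with hMn
  have hMcast : (Mn : ℤ) = 6 * (m2:ℤ) - 2 * (m1:ℤ)^2 := by
    have h1 : 2 * m1^2 ≤ 6 * m2 := by omega
    rw [hMn]
    push_cast [Nat.cast_sub h1]
    ring
  -- injection into reps Mn
  have hinj : S.card ≤ (reps Mn).card := by
    apply Finset.card_le_card_of_injOn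
      (f := fun z => ((3*(z.1:ℤ) - m1, (z.2.1:ℤ) - z.2.2)))
    · intro z hz
      obtain ⟨-, hz1, hz2⟩ := Finset.mem_filter.mp hz
      have hz1' : (z.1:ℤ) + z.2.1 + z.2.2 = m1 := by exact_mod_cast hz1
      have hz2' : (z.1:ℤ)^2 + (z.2.1:ℤ)^2 + (z.2.2:ℤ)^2 = m2 := by exact_mod_cast hz2
      simp only [Finset.mem_coe, mem_reps]
      rw [hMcast]
      linear_combination (3*(z.1:ℤ) - 3*(z.2.1:ℤ) - 3*(z.2.2:ℤ) - 3*(m1:ℤ)) * hz1' + 6 * hz2'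
    · intro z hz w hw hzw
      obtain ⟨-, hz1, -⟩ := Finset.mem_filter.mp hz
      obtain ⟨-, hw1, -⟩ := Finset.mem_filter.mp hw
      have e1 := congrArg Prod.fst hzw
      have e2 := congrArg Prod.snd hzw
      simp only [] at e1 e2
      have hz1' : (z.1:ℤ) + z.2.1 + z.2.2 = m1 := by exact_mod_cast hz1
      have hw1' : (w.1:ℤ) + w.2.1 + w.2.2 = m1 := by exact_mod_cast hw1
      have c1 : z.1 = w.1 := by omega
      have c2 : z.2.1 = w.2.1 := by omega
      have c3 : z.2.2 = w.2.2 := by omega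
      exact Prod.ext c1 (Prod.ext c2 c3)
  by_cases hM0 : Mn = 0
  · -- degenerate case: at most one solution
    have hdeg : m1^2 = 3 * m2 := by omega
    have hone : S.card ≤ 1 := by
      apply Finset.card_le_one.mpr
      intro a ha b hb
      have key : ∀ z : ℕ × ℕ × ℕ, z ∈ S → z.1 = z.2.1 ∧ z.2.1 = z.2.2 ∧ 3 * z.1 = m1 := by
        intro z hz
        obtain ⟨-, hz1, hz2⟩ := Finset.mem_filter.mp hz
        have hz1' : (z.1:ℤ) + z.2.1 + z.2.2 = m1 := by exact_mod_cast hz1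
        have hz2' : (z.1:ℤ)^2 + (z.2.1:ℤ)^2 + (z.2.2:ℤ)^2 = m2 := by exact_mod_cast hz2
        have hdeg' : (m1:ℤ)^2 = 3 * m2 := by exact_mod_cast hdeg
        have hsum0 : ((z.1:ℤ) - z.2.1)^2 + ((z.2.1:ℤ) - z.2.2)^2 + ((z.1:ℤ) - z.2.2)^2 = 0 := by
          linear_combination 3 * hz2' - hdeg' - ((z.1:ℤ) + (z.2.1:ℤ) + (z.2.2:ℤ) + (m1:ℤ)) * hz1'
        have q1' : ((z.1:ℤ) - z.2.1)^2 = 0 := by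
          linarith [sq_nonneg ((z.1:ℤ) - z.2.1), sq_nonneg ((z.2.1:ℤ) - z.2.2),
            sq_nonneg ((z.1:ℤ) - z.2.2)]
        have q2' : ((z.2.1:ℤ) - z.2.2)^2 = 0 := by
          linarith [sq_nonneg ((z.1:ℤ) - z.2.1), sq_nonneg ((z.2.1:ℤ) - z.2.2),
            sq_nonneg ((z.1:ℤ) - z.2.2)]
        have q1 : ((z.1:ℤ) - z.2.1) = 0 := pow_eq_zero_iff (by norm_num) |>.mp q1'
        have q2 : ((z.2.1:ℤ) - z.2.2) = 0 := pow_eq_zero_iff (by norm_num) |>.mp q2' 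
        refine ⟨by omega, by omega, by omega⟩
      obtain ⟨a1, a2, a3⟩ := key a ha
      obtain ⟨b1, b2, b3⟩ := key b hb
      have : a.1 = b.1 := by omega
      exact Prod.ext this (Prod.ext (by omega) (by omega))
    calc (S.card : ℝ) ≤ 1 := by exact_mod_cast hone
      _ ≤ (72 * C₀^2 + 1) * 1 := by nlinarith
      _ ≤ (72 * C₀^2 + 1) * (N:ℝ)^ε := by
          apply mul_le_mul_of_nonneg_left hNeps (by positivity)
  · -- main case
    have hMle : Mn ≤ 18 * N^2 := by omega
    have hMleR : (Mn:ℝ) ≤ 18 * (N:ℝ)^2 := by exact_mod_cast hMle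
    have hstep : ((reps Mn).card : ℝ) ≤ 4 * C₀^2 * ((Mn:ℝ)^δ)^2 := by
      have h1 : ((reps Mn).card : ℝ) ≤ ∑ g ∈ Mn.divisors, ((primReps (Mn/(g*g))).card : ℝ) := by
        have := repsCard_le Mn hM0
        calc ((reps Mn).card : ℝ) ≤ ((∑ g ∈ Mn.divisors, (primReps (Mn/(g*g))).card : ℕ) : ℝ) := by
              exact_mod_cast this
          _ = ∑ g ∈ Mn.divisors, ((primReps (Mn/(g*g))).card : ℝ) := by push_cast; rfl
      have h2 : ∀ g ∈ Mn.divisors, ((primReps (Mn/(g*g))).card : ℝ) ≤ 4 * C₀ * (Mn:ℝ)^δ := by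
        intro g hg
        by_cases hx : Mn/(g*g) = 0
        · rw [hx, primReps_zero]
          simp only [Finset.card_empty, Nat.cast_zero]
          positivity
        · calc ((primReps (Mn/(g*g))).card : ℝ)
              ≤ 4 * ((Mn/(g*g)).divisors.card : ℝ) := by
                exact_mod_cast primRepsCard _ hx
            _ ≤ 4 * (C₀ * ((Mn/(g*g) : ℕ):ℝ)^δ) := by
                have := hC₀ _ hx
                linarith
            _ ≤ 4 * C₀ * (Mn:ℝ)^δ := by
                have hmono : ((Mn/(g*g) : ℕ):ℝ)^δ ≤ (Mn:ℝ)^δ := by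
                  apply Real.rpow_le_rpow (by positivity) _ (le_of_lt hδ0)
                  exact_mod_cast Nat.div_le_self Mn (g*g)
                nlinarith [Real.rpow_nonneg (by positivity : (0:ℝ) ≤ ((Mn/(g*g) : ℕ):ℝ)) δ]
      calc ((reps Mn).card : ℝ) ≤ ∑ g ∈ Mn.divisors, ((primReps (Mn/(g*g))).card : ℝ) := h1
        _ ≤ ∑ _g ∈ Mn.divisors, (4 * C₀ * (Mn:ℝ)^δ) := Finset.sum_le_sum h2
        _ = (Mn.divisors.card : ℝ) * (4 * C₀ * (Mn:ℝ)^δ) := by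
            rw [Finset.sum_const, nsmul_eq_mul]
        _ ≤ (C₀ * (Mn:ℝ)^δ) * (4 * C₀ * (Mn:ℝ)^δ) := by
            apply mul_le_mul_of_nonneg_right (hC₀ _ hM0)
            positivity
        _ = 4 * C₀^2 * ((Mn:ℝ)^δ)^2 := by ring
    -- now bound (Mn^δ)^2
    have hfinal : ((Mn:ℝ)^δ)^2 ≤ 18 * (N:ℝ)^ε := by
      have hN0 : (0:ℝ) < (N:ℝ) := lt_of_lt_of_le one_pos hNR
      have ha : (Mn:ℝ)^δ ≤ (18 * (N:ℝ)^2)^δ :=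
        Real.rpow_le_rpow (by positivity) hMleR (le_of_lt hδ0)
      have hsplit : ((18:ℝ) * (N:ℝ)^2)^δ = (18:ℝ)^δ * (N:ℝ)^(2*δ) := by
        rw [Real.mul_rpow (by norm_num) (by positivity), ← Real.rpow_natCast (N:ℝ) 2,
            ← Real.rpow_mul (le_of_lt hN0)]
        norm_num
      have hb : ((Mn:ℝ)^δ)^2 ≤ ((18:ℝ)^δ * (N:ℝ)^(2*δ))^2 := by
        rw [← hsplit]; exact pow_le_pow_left₀ (by positivity) ha 2
      have hc : ((18:ℝ)^δ * (N:ℝ)^(2*δ))^2 = (18:ℝ)^(2*δ) * (N:ℝ)^(4*δ) := by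
        have e1 : (18:ℝ)^δ * (18:ℝ)^δ = (18:ℝ)^(2*δ) := by
          rw [← Real.rpow_add (by norm_num)]; congr 1; ring
        have e2 : (N:ℝ)^(2*δ) * (N:ℝ)^(2*δ) = (N:ℝ)^(4*δ) := by
          rw [← Real.rpow_add hN0]; congr 1; ring
        calc ((18:ℝ)^δ * (N:ℝ)^(2*δ))^2
            = ((18:ℝ)^δ * (18:ℝ)^δ) * ((N:ℝ)^(2*δ) * (N:ℝ)^(2*δ)) := by ring
          _ = (18:ℝ)^(2*δ) * (N:ℝ)^(4*δ) := by rw [e1, e2]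
      have hd : (18:ℝ)^(2*δ) ≤ 18 := by
        calc (18:ℝ)^(2*δ) ≤ (18:ℝ)^(1:ℝ) := by
              apply Real.rpow_le_rpow_of_exponent_le (by norm_num)
              rw [hδ]
              have : min ε 1 ≤ 1 := min_le_right _ _
              linarith
          _ = 18 := Real.rpow_one 18
      have he : (N:ℝ)^(4*δ) ≤ (N:ℝ)^ε := by
        apply Real.rpow_le_rpow_of_exponent_le hNR
        rw [hδ]
        have h1 : min ε 1 ≤ ε := min_le_left _ _
        have h2 : 0 < min ε 1 := hε1
        linarith
      calc ((Mn:ℝ)^δ)^2 ≤ (18:ℝ)^(2*δ) * (N:ℝ)^(4*δ) := by rw [← hc]; exact hb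
        _ ≤ 18 * (N:ℝ)^ε := by
            apply mul_le_mul hd he (by positivity) (by norm_num)
    calc (S.card : ℝ) ≤ ((reps Mn).card : ℝ) := by exact_mod_cast hinj
      _ ≤ 4 * C₀^2 * ((Mn:ℝ)^δ)^2 := hstep
      _ ≤ 4 * C₀^2 * (18 * (N:ℝ)^ε) := by
          apply mul_le_mul_of_nonneg_left hfinal (by positivity)
      _ = 72 * C₀^2 * (N:ℝ)^ε := by ring
      _ ≤ (72 * C₀^2 + 1) * (N:ℝ)^ε := by nlinarith
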